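/- Let G be a finite simple undirected graph with n vertices, k ≥ 1 an integer, 1 ≤ p < n, and (A_i)_{i=0}^{p} a greedy sequence for dom. Then for every B ⊆ V with |B| = p: (i) ext(A_p) ≥ (1 − 1/e) · ext(B) − p/e; (ii) if ext(A_p) > 0 then, setting θ_p = ext(A_p)/p, ext(A_p) ≥ (θ_p(e − 1)/(1 + θ_p e)) · ext(B); and (iii) setting σ_p = ext(A_p)/(n − p), ext(A_p) ≥ σ_p · ext(B). Consequently ext(A_p) ≥ max{θ_p(e − 1)/(1 + θ_p e), σ_p} · ext(B) whenever ext(A_p) > 0. -/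

import Mathlib

open Finset
open scoped Classical

/-- The closed `k`-neighborhood of `v`: all vertices at graph distance at most `k`
from `v` (in particular `v` itself). -/
noncomputable def kNbhd {V : Type*} [Fintype V] (G : SimpleGraph V) (k : ℕ) (v : V) :
    Finset V :=
  Finset.univ.filter (fun u => G.Reachable u v ∧ G.dist u v ≤ k)

/-- `domk G k A` is the number of vertices `k`-hop dominated by `A`. -/
noncomputable def domk {V : Type*} [Fintype V] (G : SimpleGraph V) (k : ℕ) (A : Finset V) :
    ℕ :=
  (A.biUnion (kNbhd G k)).card

/-- `extk G k A` is the number of vertices externally `k`-hop dominated by `A`. -/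
noncomputable def extk {V : Type*} [Fintype V] (G : SimpleGraph V) (k : ℕ) (A : Finset V) :
    ℤ :=
  (domk G k A : ℤ) - (A.card : ℤ)

/-- A greedy sequence for `domk G k` (with `N` greedy steps): `A 0 = ∅` and each
`A (i+1)` is obtained from `A i` by inserting a new vertex maximizing `domk`. -/
def IsGreedySeq {V : Type*} [Fintype V] (G : SimpleGraph V) (k : ℕ) (N : ℕ)
    (A : ℕ → Finset V) : Prop :=
  A 0 = ∅ ∧ ∀ i < N, ∃ v ∉ A i, A (i + 1) = insert v (A i) ∧
    ∀ u ∉ A i, domk G k (insert u (A i)) ≤ domk G k (insert v (A i))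

section aux
variable {V : Type*} [Fintype V] (G : SimpleGraph V) (k : ℕ)

lemma self_mem_kNbhd (v : V) : v ∈ kNbhd G k v := by
  simp [kNbhd, SimpleGraph.dist_self]

lemma card_le_domk (A : Finset V) : A.card ≤ domk G k A :=
  Finset.card_le_card fun a ha => Finset.mem_biUnion.2 ⟨a, ha, self_mem_kNbhd G k a⟩

lemma domk_le_card (A : Finset V) : domk G k A ≤ Fintype.card V :=
  Finset.card_le_univ _

lemma domk_mono {A B : Finset V} (h : A ⊆ B) : domk G k A ≤ domk G k B :=
  Finset.card_le_card (Finset.biUnion_subset_biUnion_of_subset_left _ h)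

lemma domk_subadd (A B : Finset V) :
    (domk G k B : ℝ) ≤ (domk G k A : ℝ) +
      ∑ v ∈ B, ((domk G k (insert v A) : ℝ) - (domk G k A : ℝ)) := by
  classical
  set f := kNbhd G k with hf
  set S := A.biUnion f with hS
  have hterm : ∀ v : V, ((domk G k (insert v A) : ℝ) - (domk G k A : ℝ))
      = ((f v \ S).card : ℝ) := by
    intro v
    have h1 : (insert v A).biUnion f = f v ∪ S := by rw [hS, Finset.biUnion_insert]
    have h2 : (f v \ S).card + S.card = (f v ∪ S).card := Finset.card_sdiff_add_card _ _
    have h3 : domk G k (insert v A) = (f v \ S).card + S.card := by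
      rw [domk, ← hf, h1, h2]
    have h4 : domk G k A = S.card := rfl
    rw [h3, h4]; push_cast; ring
  have hsub : B.biUnion f ⊆ S ∪ B.biUnion (fun v => f v \ S) := by
    intro u hu
    rw [Finset.mem_biUnion] at hu
    obtain ⟨v, hv, huv⟩ := hu
    by_cases h : u ∈ S
    · exact Finset.mem_union_left _ h
    · exact Finset.mem_union_right _
        (Finset.mem_biUnion.2 ⟨v, hv, Finset.mem_sdiff.2 ⟨huv, h⟩⟩)
  have h1 : domk G k B ≤ S.card + ∑ v ∈ B, (f v \ S).card := by
    refine (Finset.card_le_card hsub).trans ?_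
    refine (Finset.card_union_le _ _).trans ?_
    gcongr
    exact Finset.card_biUnion_le
  have h4 : domk G k A = S.card := rfl
  calc (domk G k B : ℝ) ≤ (S.card : ℝ) + ∑ v ∈ B, ((f v \ S).card : ℝ) := by
        exact_mod_cast h1
    _ = _ := by
        rw [h4]
        congr 1
        exact Finset.sum_congr rfl fun v _ => (hterm v).symm

/-- cards along a greedy sequence -/
lemma greedy_card {N : ℕ} {A : ℕ → Finset V} (hA : IsGreedySeq G k N A) :
    ∀ i ≤ N, (A i).card = i := by
  intro i hi
  induction i with
  | zero => simp [hA.1]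
  | succ j ih =>
      obtain ⟨v, hv, hEq, -⟩ := hA.2 j (Nat.lt_of_succ_le hi)
      rw [hEq, Finset.card_insert_of_notMem hv, ih (Nat.le_of_succ_le hi)]

/-- the classical greedy guarantee for coverage -/
lemma greedy_coverage {p : ℕ} (hp1 : 1 ≤ p) {A : ℕ → Finset V}
    (hA : IsGreedySeq G k p A) (B : Finset V) (hB : B.card = p) :
    (1 - 1 / Real.exp 1) * (domk G k B : ℝ) ≤ (domk G k (A p) : ℝ) := by
  have hPpos : (0 : ℝ) < (p : ℝ) := by exact_mod_cast hp1
  set D : ℝ := (domk G k B : ℝ) with hD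
  set c : ℝ := 1 - 1 / (p : ℝ) with hc
  have hc0 : 0 ≤ c := by
    rw [hc, sub_nonneg, div_le_one hPpos]
    exact_mod_cast hp1
  -- greedy step inequality
  have step : ∀ i < p, D ≤ (domk G k (A i) : ℝ)
      + (p : ℝ) * ((domk G k (A (i+1)) : ℝ) - (domk G k (A i) : ℝ)) := by
    intro i hi
    obtain ⟨v, hv, hEq, hmax⟩ := hA.2 i hi
    have hmono : (domk G k (A i) : ℝ) ≤ (domk G k (A (i+1)) : ℝ) := by
      have : A i ⊆ A (i+1) := by rw [hEq]; exact Finset.subset_insert _ _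
      exact_mod_cast domk_mono G k this
    have hterm : ∀ u ∈ B, (domk G k (insert u (A i)) : ℝ) - (domk G k (A i) : ℝ)
        ≤ (domk G k (A (i+1)) : ℝ) - (domk G k (A i) : ℝ) := by
      intro u _
      by_cases hu : u ∈ A i
      · rw [Finset.insert_eq_self.2 hu]
        linarith
      · have := hmax u hu
        rw [hEq]
        have : (domk G k (insert u (A i)) : ℝ) ≤ (domk G k (insert v (A i)) : ℝ) := by
          exact_mod_cast this
        linarith
    calc D ≤ (domk G k (A i) : ℝ)
          + ∑ u ∈ B, ((domk G k (insert u (A i)) : ℝ) - (domk G k (A i) : ℝ)) :=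
          domk_subadd G k (A i) B
      _ ≤ (domk G k (A i) : ℝ)
          + ∑ u ∈ B, ((domk G k (A (i+1)) : ℝ) - (domk G k (A i) : ℝ)) := by
          exact add_le_add (le_refl _) (Finset.sum_le_sum hterm)
      _ = (domk G k (A i) : ℝ)
          + (p : ℝ) * ((domk G k (A (i+1)) : ℝ) - (domk G k (A i) : ℝ)) := by
          rw [Finset.sum_const, hB]; push_cast; ring
  -- inductive bound
  have key : ∀ i ≤ p, D - (domk G k (A i) : ℝ) ≤ c ^ i * D := by
    intro i hi
    induction i with
    | zero =>
        have : domk G k (A 0) = 0 := by rw [hA.1]; rfl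
        simp [this]
    | succ j ih =>
        have hj : j < p := Nat.lt_of_succ_le hi
        have ih' := ih (Nat.le_of_lt hj)
        have hstep := step j hj
        have h1 : D - (domk G k (A (j+1)) : ℝ) ≤ c * (D - (domk G k (A j) : ℝ)) := by
          rw [hc]
          have hne : (p : ℝ) ≠ 0 := ne_of_gt hPpos
          field_simp
          nlinarith [hstep]
        calc D - (domk G k (A (j+1)) : ℝ) ≤ c * (D - (domk G k (A j) : ℝ)) := h1
          _ ≤ c * (c ^ j * D) := by
              exact mul_le_mul_of_nonneg_left ih' hc0
          _ = c ^ (j+1) * D := by ring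
  have hfinal := key p le_rfl
  have hDpos : 0 ≤ D := by rw [hD]; positivity
  -- (1 - 1/p)^p ≤ 1 / e
  have hcp : c ^ p ≤ 1 / Real.exp 1 := by
    have h1 : c ≤ Real.exp (-(1 / (p:ℝ))) := by
      have := Real.add_one_le_exp (-(1 / (p:ℝ)))
      rw [hc]; linarith
    have h2 : c ^ p ≤ Real.exp (-(1 / (p:ℝ))) ^ p := pow_le_pow_left₀ hc0 h1 p
    have h3 : Real.exp (-(1 / (p:ℝ))) ^ p = Real.exp ((p:ℝ) * (-(1 / (p:ℝ)))) := by
      rw [← Real.exp_nat_mul]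
    have h4 : (p:ℝ) * (-(1 / (p:ℝ))) = -1 := by
      field_simp
    rw [h3, h4, Real.exp_neg, inv_eq_one_div] at h2
    exact h2
  have : c ^ p * D ≤ (1 / Real.exp 1) * D := mul_le_mul_of_nonneg_right hcp hDpos
  linarith

end aux

/-- guarantees for the greedy sequence with respect to the external
domination objective. -/
theorem greedy_ext_guarantees {V : Type*} [Fintype V] (G : SimpleGraph V)
    (k : ℕ) (hk : 1 ≤ k) (p : ℕ) (hp1 : 1 ≤ p) (hpn : p < Fintype.card V)
    (A : ℕ → Finset V) (hA : IsGreedySeq G k p A) :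
    ∀ B : Finset V, B.card = p →
      ((1 - 1 / Real.exp 1) * (extk G k B : ℝ) - (p : ℝ) / Real.exp 1 ≤
        (extk G k (A p) : ℝ)) ∧
      ((extk G k (A p) : ℝ) / (Fintype.card V - p) * (extk G k B : ℝ) ≤
        (extk G k (A p) : ℝ)) ∧
      (0 < extk G k (A p) →
        ((extk G k (A p) : ℝ) / p * (Real.exp 1 - 1)) /
            (1 + (extk G k (A p) : ℝ) / p * Real.exp 1) * (extk G k B : ℝ) ≤
          (extk G k (A p) : ℝ) ∧
        max (((extk G k (A p) : ℝ) / p * (Real.exp 1 - 1)) /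
              (1 + (extk G k (A p) : ℝ) / p * Real.exp 1))
            ((extk G k (A p) : ℝ) / (Fintype.card V - p)) * (extk G k B : ℝ) ≤
          (extk G k (A p) : ℝ)) := by
  intro B hB
  have hcard : (A p).card = p := greedy_card G k hA p le_rfl
  have hcov := greedy_coverage G k hp1 hA B hB
  have hPpos : (0 : ℝ) < (p : ℝ) := by exact_mod_cast hp1
  have hepos : (0 : ℝ) < Real.exp 1 := Real.exp_pos 1
  have he1 : (1 : ℝ) < Real.exp 1 := by
    have := Real.add_one_le_exp (1 : ℝ); linarith
  set E : ℝ := (extk G k (A p) : ℝ) with hE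
  set X : ℝ := (extk G k B : ℝ) with hX
  have hEeq : E = (domk G k (A p) : ℝ) - (p : ℝ) := by
    rw [hE, extk, hcard]; push_cast; ring
  have hXeq : X = (domk G k B : ℝ) - (p : ℝ) := by
    rw [hX, extk, hB]; push_cast; ring
  have hX0 : 0 ≤ X := by
    rw [hXeq]
    have := card_le_domk G k B
    rw [hB] at this
    have : (p : ℝ) ≤ (domk G k B : ℝ) := by exact_mod_cast this
    linarith
  have hE0 : 0 ≤ E := by
    rw [hEeq]
    have := card_le_domk G k (A p)
    rw [hcard] at this
    have : (p : ℝ) ≤ (domk G k (A p) : ℝ) := by exact_mod_cast this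
    linarith
  have hnp : (0 : ℝ) < (Fintype.card V : ℝ) - (p : ℝ) := by
    have : (p : ℝ) < (Fintype.card V : ℝ) := by exact_mod_cast hpn
    linarith
  have hXle : X ≤ (Fintype.card V : ℝ) - (p : ℝ) := by
    rw [hXeq]
    have := domk_le_card G k B
    have : (domk G k B : ℝ) ≤ (Fintype.card V : ℝ) := by exact_mod_cast this
    linarith
  -- part (i)
  have part1 : (1 - 1 / Real.exp 1) * X - (p : ℝ) / Real.exp 1 ≤ E := by
    rw [hEeq, hXeq]
    have h : (1 - 1 / Real.exp 1) * ((domk G k B : ℝ) - p) - (p:ℝ) / Real.exp 1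
        = (1 - 1 / Real.exp 1) * (domk G k B : ℝ) - p := by
      field_simp
      ring
    rw [h]
    linarith
  -- part (iii)
  have part3 : E / ((Fintype.card V : ℝ) - p) * X ≤ E := by
    have h1 : E / ((Fintype.card V : ℝ) - p) * X
        ≤ E / ((Fintype.card V : ℝ) - p) * ((Fintype.card V : ℝ) - p) := by
      apply mul_le_mul_of_nonneg_left hXle (by positivity)
    rw [div_mul_cancel₀ E (ne_of_gt hnp)] at h1
    exact h1
  refine ⟨part1, by exact_mod_cast part3, ?_⟩
  intro hEposZ
  have hEpos : 0 < E := by rw [hE]; exact_mod_cast hEposZ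
  have hden : 0 < 1 + E / (p:ℝ) * Real.exp 1 := by positivity
  -- part (ii)
  have part2 : (E / (p:ℝ) * (Real.exp 1 - 1)) / (1 + E / (p:ℝ) * Real.exp 1) * X ≤ E := by
    rw [div_mul_eq_mul_div, div_le_iff₀ hden]
    have hi' : (Real.exp 1 - 1) * X - (p:ℝ) ≤ Real.exp 1 * E := by
      have := mul_le_mul_of_nonneg_right part1 (le_of_lt hepos)
      -- ((1 - 1/e)*X - p/e) * e = (e-1)*X - p
      have heq : ((1 - 1 / Real.exp 1) * X - (p : ℝ) / Real.exp 1) * Real.exp 1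
          = (Real.exp 1 - 1) * X - (p:ℝ) := by
        field_simp
      nlinarith [this]
    -- goal: E/p*(e-1)*X ≤ E * (1 + E/p * e); multiply by p
    rw [← sub_nonneg]
    have key : E * (1 + E / (p:ℝ) * Real.exp 1) - E / (p:ℝ) * (Real.exp 1 - 1) * X
        = (E * (p:ℝ) + E * E * Real.exp 1 - E * (Real.exp 1 - 1) * X) / (p:ℝ) := by
      field_simp
    rw [key]
    apply div_nonneg _ (le_of_lt hPpos)
    nlinarith [mul_le_mul_of_nonneg_left hi' (le_of_lt hEpos)]
  refine ⟨by exact_mod_cast part2, ?_⟩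
  have hmm : max ((E / (p:ℝ) * (Real.exp 1 - 1)) / (1 + E / (p:ℝ) * Real.exp 1))
      (E / ((Fintype.card V : ℝ) - p)) * X ≤ E := by
    rw [max_mul_of_nonneg _ _ hX0]
    exact max_le part2 part3
  exact_mod_cast hmm
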